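/- Let a : Fin q → (Fin n →₀ ℕ) be the exponent vectors of q monomials m_1, …, m_q, and let c : Fin n →₀ ℕ be the exponent vector of any monomial m. Let W be the set of vertices (i,j) of M_q² (pairs i ≤ j in Fin q) such that m_i m_j divides m, i.e., a i + a j ≤ c pointwise. Define a simple graph on W where two distinct vertices are adjacent if and only if not both of them are diagonal. Then this graph is preconnected (so the induced subcomplex (M_q²)_m is empty or connected, which is the key step showing that M_q² supports a free resolution of I² for I = (m_1, …, m_q)). -/

import Mathlib

/-- The vertex set of the simplicial complex `M_q²`: pairs `(i,j)` with `i ≤ j` in `Fin q`. -/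
abbrev MqVertex (q : ℕ) := {p : Fin q × Fin q // p.1 ≤ p.2}

/-- Given exponent vectors `a i` of monomials `m_1, …, m_q` and the exponent vector `c` of a
monomial `m`, this is the graph on the vertices `(i,j)` of `M_q²` whose labels `m_i m_j`
divide `m`, where two distinct vertices are adjacent iff not both are diagonal. -/
def divGraph (q n : ℕ) (a : Fin q → (Fin n →₀ ℕ)) (c : Fin n →₀ ℕ) :
    SimpleGraph {v : MqVertex q // a v.1.1 + a v.1.2 ≤ c} where
  Adj v w := v ≠ w ∧ ¬ (v.1.1.1 = v.1.1.2 ∧ w.1.1.1 = w.1.1.2)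
  symm := by
    constructor
    intro v w h
    exact ⟨h.1.symm, fun hd => h.2 ⟨hd.2, hd.1⟩⟩
  loopless := by
    constructor
    intro v h
    exact h.1 rfl

/-- The graph on the vertices of `(M_q²)_m` (vertices of `M_q²` whose monomial label divides `m`),
in which two distinct vertices are adjacent iff not both are diagonal, is preconnected.
Hence the induced subcomplex `(M_q²)_m` is empty or connected. -/
theorem divGraph_preconnected (q n : ℕ) (hq : 0 < q) (a : Fin q → (Fin n →₀ ℕ))
    (c : Fin n →₀ ℕ) : (divGraph q n a c).Preconnected := by
  intro v w
  by_cases hvw : v = w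
  · exact hvw ▸ SimpleGraph.Reachable.refl v
  by_cases hd : v.1.1.1 = v.1.1.2 ∧ w.1.1.1 = w.1.1.2
  · -- both diagonal: (i,i) and (j,j) with i ≠ j; go through the off-diagonal vertex
    set i := v.1.1.1
    set j := w.1.1.1
    have hij : i ≠ j := by
      intro h
      apply hvw
      apply Subtype.ext; apply Subtype.ext
      have hv := hd.1; have hw := hd.2
      exact Prod.ext (h) (by rw [← hv, ← hw, h])
    have hle : a i + a j ≤ c := by
      have h1 : a i + a i ≤ c := by
        have := v.2; rwa [← hd.1] at this
      have h2 : a j + a j ≤ c := by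
        have := w.2; rwa [← hd.2] at this
      rw [Finsupp.le_def] at h1 h2 ⊢
      intro x
      have := add_le_add (h1 x) (h2 x)
      simp only [Finsupp.add_apply] at *
      omega
    let T := {v : MqVertex q // a v.1.1 + a v.1.2 ≤ c}
    rcases le_or_gt i j with hij' | hij'
    · have hmid : a (⟨(i, j), hij'⟩ : MqVertex q).1.1 + a (⟨(i, j), hij'⟩ : MqVertex q).1.2 ≤ c := hle
      set mid : T := ⟨⟨(i, j), hij'⟩, hmid⟩
      have h1 : (divGraph q n a c).Adj v mid :=
        ⟨fun h => hij (hd.1.trans (@congrArg T (Fin q) v mid (fun z => z.1.1.2) h)),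
         fun h => hij h.2⟩
      have h2 : (divGraph q n a c).Adj mid w :=
        ⟨fun h => hij (@congrArg T (Fin q) mid w (fun z => z.1.1.1) h), fun h => hij h.1⟩
      exact (h1.reachable).trans h2.reachable
    · have hle' : a j + a i ≤ c := by rwa [add_comm]
      set mid : T := ⟨⟨(j, i), hij'.le⟩, hle'⟩
      have h1 : (divGraph q n a c).Adj v mid :=
        ⟨fun h => hij (@congrArg T (Fin q) v mid (fun z => z.1.1.1) h), fun h => hij h.2.symm⟩
      have h2 : (divGraph q n a c).Adj mid w :=
        ⟨fun h => hij ((@congrArg T (Fin q) mid w (fun z => z.1.1.2) h).trans hd.2.symm),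
         fun h => hij h.1.symm⟩
      exact (h1.reachable).trans h2.reachable
  · exact SimpleGraph.Adj.reachable ⟨hvw, hd⟩
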